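/- arXiv:2407.21249 — 2 statements merged into one kernel-verified Lean document; each statement's English description precedes it below -/
import Mathlib

section
/- Let H be a subgroup of the direct product G₁ × G₂ × ... × G_r of groups such that for every pair of indices i < j, the projection of H onto G_i × G_j is surjective. If each G_i is a perfect group (equal to its own commutator subgroup), then H = G₁ × G₂ × ... × G_r. -/
set_option maxHeartbeats 1000000

open scoped commutatorElement

universe u v

theorem serre_aux : ∀ (n : ℕ) {ι : Type u} [Finite ι], Nat.card ι = n → 2 ≤ n →
    ∀ (G : ι → Type v) [∀ i, Group (G i)],
    (∀ i, commutator (G i) = ⊤) →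
    ∀ (H : Subgroup (∀ i, G i)),
    (∀ i j, i ≠ j → ∀ (a : G i) (b : G j), ∃ h ∈ H, h i = a ∧ h j = b) →
    H = ⊤ := by
  intro n
  induction n using Nat.strong_induction_on with
  | _ n IH =>
  intro ι _ hn hcard G _ hperf H hproj
  classical
  letI : Fintype ι := Fintype.ofFinite ι
  have hnontriv : Nontrivial ι := by
    rw [← Fintype.one_lt_card_iff_nontrivial, ← Nat.card_eq_fintype_card]; omega
  have key : ∀ (j : ι) (g : G j), Pi.mulSingle j g ∈ H := by
    rcases eq_or_lt_of_le hcard with h2 | h3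
    · -- base case: exactly two indices
      obtain ⟨x, y, hxy, huniv⟩ := Nat.card_eq_two_iff.mp (by omega : Nat.card ι = 2)
      have hmem : ∀ k : ι, k = x ∨ k = y := by
        intro k
        have : k ∈ ({x, y} : Set ι) := huniv ▸ Set.mem_univ k
        simpa using this
      intro j g
      obtain ⟨i, hij⟩ := exists_ne j
      obtain ⟨h, hH, hj, hi⟩ := hproj j i (Ne.symm hij) g 1
      have : h = Pi.mulSingle j g := by
        funext k
        rcases eq_or_ne k j with rfl | hkj
        · simpa using hj
        · have hki : k = i := by
            rcases hmem k with rfl | rfl <;> rcases hmem i with h' | h' <;>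
              rcases hmem j with h2 | h2 <;>
                first
                  | exact h'.symm
                  | exact absurd h2.symm hkj
                  | exact absurd (h'.trans h2.symm) hij
          subst hki
          rw [Pi.mulSingle_eq_of_ne hkj, hi]
      exact this ▸ hH
    · -- inductive step: at least three indices
      intro j g
      set ι' := {k : ι // k ≠ j} with hι'
      letI : Fintype ι' := Fintype.ofFinite ι'
      have hcard' : Nat.card ι' = n - 1 := by
        have e : {k : ι // k = j} ⊕ {k : ι // ¬ k = j} ≃ ι := Equiv.sumCompl _
        have h1 : Nat.card ι = Nat.card {k : ι // k = j} + Nat.card {k : ι // ¬ k = j} := by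
          rw [Nat.card_congr e.symm, Nat.card_sum]
        have h2 : Nat.card {k : ι // k = j} = 1 := by
          rw [Nat.card_eq_one_iff_unique]
          exact ⟨⟨fun a b => Subtype.ext (a.2.trans b.2.symm)⟩, ⟨⟨j, rfl⟩⟩⟩
        have h3 : Nat.card ι' = Nat.card {k : ι // ¬ k = j} := rfl
        omega
      have h2' : 2 ≤ n - 1 := by omega
      let res : (∀ i, G i) →* (∀ k : ι', G k.1) :=
        { toFun := fun f k => f k.1, map_one' := rfl, map_mul' := fun _ _ => rfl }
      -- the projection of H to the product over ι' is everything, by induction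
      have hH' : Subgroup.map res H = ⊤ := by
        apply IH (n - 1) (by omega) hcard' h2' _ (fun k => hperf k.1)
        intro k l hkl a b
        obtain ⟨h, hH, hk, hl⟩ := hproj k.1 l.1 (fun e => hkl (Subtype.ext e)) a b
        exact ⟨res h, Subgroup.mem_map.mpr ⟨h, hH, rfl⟩, hk, hl⟩
      -- the subgroup A
      set A : Subgroup (∀ k : ι', G k.1) :=
        Subgroup.map res (H ⊓ (Pi.evalMonoidHom G j).ker) with hA
      have hAmem : ∀ a, a ∈ A ↔ ∃ h ∈ H, h j = 1 ∧ res h = a := by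
        intro a
        simp only [hA, Subgroup.mem_map, Subgroup.mem_inf, MonoidHom.mem_ker,
          Pi.evalMonoidHom_apply]
        tauto
      haveI hAnorm : A.Normal := by
        constructor
        intro a ha g'
        obtain ⟨h, hH, rfl⟩ : ∃ h ∈ H, res h = g' := by
          have : g' ∈ Subgroup.map res H := hH' ▸ Subgroup.mem_top g'
          obtain ⟨h, h1, h2⟩ := Subgroup.mem_map.mp this
          exact ⟨h, h1, h2⟩
        obtain ⟨h₀, h₀H, h₀j, rfl⟩ := (hAmem a).mp ha
        refine (hAmem _).mpr ⟨h * h₀ * h⁻¹, mul_mem (mul_mem hH h₀H) (inv_mem hH), ?_, ?_⟩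
        · simp [Pi.mul_apply, Pi.inv_apply, h₀j]
        · rfl
      -- A surjects onto each coordinate
      have hAproj : ∀ (k : ι') (v : G k.1), ∃ a ∈ A, a k = v := by
        intro k v
        obtain ⟨h, hH, hk, hj⟩ := hproj k.1 j k.2 v 1
        exact ⟨res h, (hAmem _).mpr ⟨h, hH, hj, rfl⟩, hk⟩
      -- every commutator of the small product lies in A
      have hcomm : ∀ x y : (∀ k : ι', G k.1), ⁅x, y⁆ ∈ A := by
        have hsingle : ∀ (k : ι') (u : G k.1),
            ((Pi.mulSingle k u : ∀ k : ι', G k.1) : (∀ k : ι', G k.1) ⧸ A)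
              ∈ Subgroup.center _ := by
          intro k u
          rw [Subgroup.mem_center_iff]
          intro q
          induction q using QuotientGroup.induction_on with
          | _ y =>
            obtain ⟨a, haA, hak⟩ := hAproj k (y k)
            have hyc : (y : (∀ k : ι', G k.1) ⧸ A) = ((a⁻¹ * y : _) : _ ⧸ A) := by
              have h1 : ((a : ∀ k : ι', G k.1) : (∀ k : ι', G k.1) ⧸ A) = 1 :=
                (QuotientGroup.eq_one_iff a).mpr haA
              rw [QuotientGroup.mk_mul, QuotientGroup.mk_inv, h1]
              group
            have hc : (a⁻¹ * y) * Pi.mulSingle k u = Pi.mulSingle k u * (a⁻¹ * y) := by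
              funext m
              rcases eq_or_ne m k with rfl | hmk
              · simp [Pi.mul_apply, Pi.inv_apply, hak]
              · simp [Pi.mul_apply, Pi.mulSingle_eq_of_ne hmk]
            rw [hyc, ← QuotientGroup.mk_mul, ← QuotientGroup.mk_mul, hc]
        have hcentral : ∀ x : (∀ k : ι', G k.1),
            (x : (∀ k : ι', G k.1) ⧸ A) ∈ Subgroup.center _ := by
          intro x
          have hx := Finset.noncommProd_mulSingle x
          show (QuotientGroup.mk' A) x ∈ Subgroup.center _
          have hm := Finset.map_noncommProd Finset.univ (fun i => Pi.mulSingle i (x i))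
            (fun i _ j _ _ => Pi.mulSingle_apply_commute x i j) (QuotientGroup.mk' A)
          rw [← hx, hm]
          exact Subgroup.noncommProd_mem _ _ fun k _ => hsingle k (x k)
        intro x y
        rw [← QuotientGroup.eq_one_iff]
        have h1 : ((⁅x, y⁆ : ∀ k : ι', G k.1) : (∀ k : ι', G k.1) ⧸ A)
            = ⁅((x : _) : (∀ k : ι', G k.1) ⧸ A), ((y : _) : (∀ k : ι', G k.1) ⧸ A)⁆ :=
          map_commutatorElement (QuotientGroup.mk' A) x y
        rw [h1]
        exact commutatorElement_eq_one_iff_commute.mpr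
          ((Subgroup.mem_center_iff.mp (hcentral x) _).symm)
      -- the subgroup D of G j
      obtain ⟨i₀, hi₀⟩ := exists_ne j
      have hD : ∀ a b : G j, ∃ h ∈ H, h j = ⁅a, b⁆ ∧ res h ∈ A := by
        intro a b
        obtain ⟨x, xH, xj, -⟩ := hproj j i₀ (Ne.symm hi₀) a 1
        obtain ⟨y, yH, yj, -⟩ := hproj j i₀ (Ne.symm hi₀) b 1
        refine ⟨⁅x, y⁆, ?_, ?_, ?_⟩
        · show x * y * x⁻¹ * y⁻¹ ∈ H
          exact mul_mem (mul_mem (mul_mem xH yH) (inv_mem xH)) (inv_mem yH)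
        · show x j * y j * (x j)⁻¹ * (y j)⁻¹ = ⁅a, b⁆
          rw [xj, yj]; rfl
        · have : res ⁅x, y⁆ = ⁅res x, res y⁆ := map_commutatorElement res x y
          rw [this]
          exact hcomm _ _
      let D : Subgroup (G j) :=
        { carrier := {g | ∃ h ∈ H, h j = g ∧ res h ∈ A}
          one_mem' := ⟨1, one_mem H, rfl, by simpa using one_mem A⟩
          mul_mem' := by
            rintro a b ⟨h₁, h₁H, rfl, h₁A⟩ ⟨h₂, h₂H, rfl, h₂A⟩
            exact ⟨h₁ * h₂, mul_mem h₁H h₂H, rfl, by rw [map_mul]; exact mul_mem h₁A h₂A⟩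
          inv_mem' := by
            rintro a ⟨h₁, h₁H, rfl, h₁A⟩
            exact ⟨h₁⁻¹, inv_mem h₁H, rfl, by rw [map_inv]; exact inv_mem h₁A⟩ }
      have hDtop : D = ⊤ := by
        rw [eq_top_iff, ← hperf j, commutator_def, Subgroup.commutator_le]
        intro a _ b _
        obtain ⟨h, hH, hj, hA'⟩ := hD a b
        exact ⟨h, hH, hj, hA'⟩
      -- conclude
      have hg : g ∈ D := hDtop ▸ Subgroup.mem_top g
      obtain ⟨h', h'H, h'j, h'A⟩ := hg
      obtain ⟨h₀, h₀H, h₀j, h₀res⟩ := (hAmem _).mp h'A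
      have : h' * h₀⁻¹ = Pi.mulSingle j g := by
        funext k
        rcases eq_or_ne k j with rfl | hkj
        · show h' k * (h₀ k)⁻¹ = _
          rw [h'j, h₀j, Pi.mulSingle_eq_same, inv_one, mul_one]
        · show h' k * (h₀ k)⁻¹ = _
          have : h₀ k = h' k := congrFun h₀res ⟨k, hkj⟩
          rw [this, mul_inv_cancel, Pi.mulSingle_eq_of_ne hkj]
      exact this ▸ mul_mem h'H (inv_mem h₀H)
  rw [Subgroup.eq_top_iff']
  intro x
  rw [← Finset.noncommProd_mulSingle x]
  exact Subgroup.noncommProd_mem H _ fun j _ => key j (x j)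

/-- **Serre's lemma.** If `H` is a subgroup of a finite direct product of groups
`G i` such that for every pair of distinct indices `i ≠ j` the projection of `H`
onto `G i × G j` is surjective, and each `G i` is perfect (equal to its own
commutator subgroup), then `H` is the whole product. -/
theorem serre_lemma {ι : Type*} [Finite ι] (hcard : 2 ≤ Nat.card ι)
    (G : ι → Type*) [∀ i, Group (G i)]
    (hperf : ∀ i, commutator (G i) = ⊤)
    (H : Subgroup (∀ i, G i))
    (hproj : ∀ i j, i ≠ j → ∀ (a : G i) (b : G j), ∃ h ∈ H, h i = a ∧ h j = b) :
    H = ⊤ :=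
  serre_aux (Nat.card ι) rfl hcard G hperf H hproj
end

section
/- Let H = H₁ ⊕ H₂ be an orthogonal decomposition of a finite-dimensional complex inner product space with dim H₁ = d₁ ≥ d₂ = dim H₂ ≥ 1. The real Lie algebra generated (under real linear combinations and commutators) by all operators of the form |ψ₁⟩⟨ψ₂| − |ψ₂⟩⟨ψ₁| with ψ₁ ∈ H₁, ψ₂ ∈ H₂ equals su(H), the Lie algebra of all traceless anti-Hermitian operators on H. -/
/-- The rank-one operator `|ψ⟩⟨φ| : x ↦ ⟨φ, x⟩ ψ` on a complex inner product
space. -/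
noncomputable def ketBra {E : Type*} [NormedAddCommGroup E] [InnerProductSpace ℂ E]
    [CompleteSpace E] (ψ φ : E) : Module.End ℂ E :=
  (((innerSL ℂ φ).smulRight ψ : E →L[ℂ] E) : E →ₗ[ℂ] E)

attribute [local instance] LieRing.ofAssociativeRing

open LinearMap
set_option linter.unusedSectionVars false
set_option linter.unusedTactic false

section Aux

variable {E : Type*} [NormedAddCommGroup E] [InnerProductSpace ℂ E] [FiniteDimensional ℂ E]

@[simp] lemma ketBra_apply (a b x : E) : ketBra a b x = (inner ℂ b x : ℂ) • a := rfl

lemma ketBra_mul (a b c d : E) :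
    ketBra a b * ketBra c d = (inner ℂ b c : ℂ) • ketBra a d := by
  ext x
  simp [ketBra_apply, Module.End.mul_apply, inner_smul_right, smul_smul, mul_comm]

lemma ketBra_smul_left (c : ℂ) (a b : E) : ketBra (c • a) b = c • ketBra a b := by
  ext x
  simp only [ketBra_apply, LinearMap.smul_apply]
  rw [smul_comm]

lemma ketBra_smul_right (c : ℂ) (a b : E) :
    ketBra a (c • b) = (starRingEnd ℂ c) • ketBra a b := by
  ext x; simp [inner_smul_left, mul_smul]; exact smul_comm _ _ _

lemma adjoint_ketBra (a b : E) : adjoint (ketBra a b) = ketBra b a := by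
  symm
  rw [LinearMap.eq_adjoint_iff]
  intro x y
  simp [ketBra_apply, inner_smul_left, inner_smul_right]
  ring

lemma trace_ketBra (a b : E) : trace ℂ E (ketBra a b) = (inner ℂ b a : ℂ) := by
  have h : ketBra a b = (toSpanSingleton ℂ E a) ∘ₗ ((innerSL ℂ b).toLinearMap) := by
    ext x; simp [ketBra_apply, toSpanSingleton_apply]
  rw [h, trace_comp_comm']
  have h2 : ((innerSL ℂ b).toLinearMap) ∘ₗ (toSpanSingleton ℂ E a)
      = (inner ℂ b a : ℂ) • LinearMap.id := by
    ext
    simp [toSpanSingleton_apply]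
  rw [h2, map_smul, trace_id, Module.finrank_self]
  simp

noncomputable def suAlg (E : Type*) [NormedAddCommGroup E] [InnerProductSpace ℂ E]
    [FiniteDimensional ℂ E] : LieSubalgebra ℝ (Module.End ℂ E) where
  carrier := {X : Module.End ℂ E | trace ℂ E X = 0 ∧ adjoint X = -X}
  add_mem' := by
    rintro X Y ⟨hX1, hX2⟩ ⟨hY1, hY2⟩
    refine ⟨by simp [hX1, hY1], by simp [map_add, hX2, hY2]; abel⟩
  zero_mem' := by simp
  smul_mem' := by
    rintro r X ⟨hX1, hX2⟩
    constructor
    · rw [map_smul_of_tower, hX1, smul_zero]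
    · have : (r : ℝ) • X = (r : ℂ) • X := by
        simp [Complex.coe_smul]
      rw [this, ← LinearMap.star_eq_adjoint, star_smul, LinearMap.star_eq_adjoint, hX2]
      simp
  lie_mem' := by
    rintro X Y ⟨hX1, hX2⟩ ⟨hY1, hY2⟩
    rw [Ring.lie_def]
    constructor
    · rw [map_sub, trace_mul_comm, sub_self]
    · rw [map_sub, Module.End.mul_eq_comp, Module.End.mul_eq_comp,
        adjoint_comp, adjoint_comp, hX2, hY2]
      simp [Module.End.mul_eq_comp]

@[simp] lemma mem_suAlg {X : Module.End ℂ E} :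
    X ∈ suAlg E ↔ trace ℂ E X = 0 ∧ adjoint X = -X := Iff.rfl

noncomputable def opA (a b : E) : Module.End ℂ E := ketBra a b - ketBra b a
noncomputable def opS (a b : E) : Module.End ℂ E :=
  Complex.I • (ketBra a b + ketBra b a)
noncomputable def opD (a b : E) : Module.End ℂ E :=
  Complex.I • ketBra a a - Complex.I • ketBra b b

lemma realSmul (r : ℝ) (M : Module.End ℂ E) : r • M = (r : ℂ) • M := by
  rw [← algebraMap_smul ℂ r M]
  norm_num

lemma opA_swap (a b : E) : opA b a = -opA a b := by simp [opA]

lemma opA_self (a : E) : opA a a = 0 := by simp [opA]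

lemma opS_swap (a b : E) : opS b a = opS a b := by
  simp [opS]; module

lemma opS_eq (a b : E) : opS a b = opA (Complex.I • a) b := by
  simp only [opS, opA, ketBra_smul_left, ketBra_smul_right, Complex.conj_I]
  module

lemma opD_swap (a b : E) : opD b a = -opD a b := by simp [opD]

lemma opD_sub (a b c : E) : opD a c - opD b c = opD a b := by
  simp only [opD]; module

lemma lie_opA_opA (a c f : E) (hff : (inner ℂ f f : ℂ) = 1)
    (hfa : (inner ℂ f a : ℂ) = 0) (haf : (inner ℂ a f : ℂ) = 0)
    (hfc : (inner ℂ f c : ℂ) = 0) (hcf : (inner ℂ c f : ℂ) = 0)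
    (hac : (inner ℂ a c : ℂ) = 0) (hca : (inner ℂ c a : ℂ) = 0) :
    ⁅opA a f, opA c f⁆ = -opA a c := by
  simp only [Ring.lie_def, opA, sub_mul, mul_sub, ketBra_mul,
    hff, hfa, haf, hfc, hcf, hac, hca]
  module

lemma lie_opS_opA (a c f : E) (hff : (inner ℂ f f : ℂ) = 1)
    (hfa : (inner ℂ f a : ℂ) = 0) (haf : (inner ℂ a f : ℂ) = 0)
    (hfc : (inner ℂ f c : ℂ) = 0) (hcf : (inner ℂ c f : ℂ) = 0)
    (hac : (inner ℂ a c : ℂ) = 0) (hca : (inner ℂ c a : ℂ) = 0) :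
    ⁅opS a f, opA c f⁆ = -opS a c := by
  simp only [Ring.lie_def, opA, opS, sub_mul, mul_sub, add_mul, mul_add,
    smul_mul_assoc, mul_smul_comm, ketBra_mul,
    hff, hfa, haf, hfc, hcf, hac, hca]
  module

lemma opD_eq (e f : E) (hee : (inner ℂ e e : ℂ) = 1) (hff : (inner ℂ f f : ℂ) = 1)
    (hef : (inner ℂ e f : ℂ) = 0) (hfe : (inner ℂ f e : ℂ) = 0) :
    opD e f = (2⁻¹ : ℝ) • ⁅opA e f, opS e f⁆ := by
  rw [realSmul]
  simp only [Ring.lie_def, opA, opS, opD, sub_mul, mul_sub, add_mul, mul_add,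
    smul_mul_assoc, mul_smul_comm, ketBra_mul, hee, hff, hef, hfe]
  match_scalars <;> push_cast <;> ring

end Aux

set_option maxHeartbeats 2000000 in
/-- Let `E = H₁ ⊕ H₁ᗮ` be an orthogonal decomposition of a finite-dimensional
complex inner product space with `dim H₁ ≥ dim H₁ᗮ ≥ 1`. The real Lie algebra
generated by the operators `|ψ₁⟩⟨ψ₂| − |ψ₂⟩⟨ψ₁|` with `ψ₁ ∈ H₁`, `ψ₂ ∈ H₁ᗮ`
is `su(E)`, the Lie algebra of traceless anti-Hermitian operators. -/
theorem lieSpan_ketBra_eq_su {E : Type*} [NormedAddCommGroup E] [InnerProductSpace ℂ E]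
    [FiniteDimensional ℂ E] (H₁ : Submodule ℂ E)
    (hle : Module.finrank ℂ H₁ᗮ ≤ Module.finrank ℂ H₁)
    (hpos : 1 ≤ Module.finrank ℂ H₁ᗮ) :
    (LieSubalgebra.lieSpan ℝ (Module.End ℂ E)
        {X | ∃ ψ₁ ∈ H₁, ∃ ψ₂ ∈ H₁ᗮ, X = ketBra ψ₁ ψ₂ - ketBra ψ₂ ψ₁} :
      Set (Module.End ℂ E)) =
      {X : Module.End ℂ E | LinearMap.trace ℂ E X = 0 ∧ LinearMap.adjoint X = -X} := by
  classical
  set L := LieSubalgebra.lieSpan ℝ (Module.End ℂ E)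
      {X | ∃ ψ₁ ∈ H₁, ∃ ψ₂ ∈ H₁ᗮ, X = ketBra ψ₁ ψ₂ - ketBra ψ₂ ψ₁} with hLdef
  have horth : ∀ x ∈ H₁, ∀ y ∈ H₁ᗮ, (inner ℂ x y : ℂ) = 0 := fun x hx y hy =>
    (Submodule.mem_orthogonal H₁ y).1 hy x hx
  apply Set.Subset.antisymm
  · -- ⊆ : generators are in su
    have hsub : {X : Module.End ℂ E |
        ∃ ψ₁ ∈ H₁, ∃ ψ₂ ∈ H₁ᗮ, X = ketBra ψ₁ ψ₂ - ketBra ψ₂ ψ₁} ⊆ ↑(suAlg E) := by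
      rintro X ⟨ψ₁, h₁, ψ₂, h₂, rfl⟩
      constructor
      · rw [map_sub, trace_ketBra, trace_ketBra, horth ψ₁ h₁ ψ₂ h₂,
          inner_eq_zero_symm.mp (horth ψ₁ h₁ ψ₂ h₂), sub_zero]
      · rw [map_sub, adjoint_ketBra, adjoint_ketBra, neg_sub]
    intro X hX
    exact LieSubalgebra.lieSpan_le.mpr hsub hX
  · -- ⊇
    intro X hX
    obtain ⟨htr, hadj⟩ := hX
    have hd1pos : 0 < Module.finrank ℂ H₁ := lt_of_lt_of_le hpos hle
    set d₁ := Module.finrank ℂ H₁ with hd₁def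
    set d₂ := Module.finrank ℂ H₁ᗮ with hd₂def
    let e : Fin d₁ → E := fun i => (stdOrthonormalBasis ℂ H₁ i : E)
    let f : Fin d₂ → E := fun j => (stdOrthonormalBasis ℂ H₁ᗮ j : E)
    have he_mem : ∀ i, e i ∈ H₁ := fun i => SetLike.coe_mem _
    have hf_mem : ∀ j, f j ∈ H₁ᗮ := fun j => SetLike.coe_mem _
    have he : ∀ i k, (inner ℂ (e i) (e k) : ℂ) = if i = k then 1 else 0 := by
      intro i k
      have h := orthonormal_iff_ite.mp (stdOrthonormalBasis ℂ H₁).orthonormal i k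
      simpa [e, Submodule.coe_inner] using h
    have hf : ∀ j l, (inner ℂ (f j) (f l) : ℂ) = if j = l then 1 else 0 := by
      intro j l
      have h := orthonormal_iff_ite.mp (stdOrthonormalBasis ℂ H₁ᗮ).orthonormal j l
      simpa [f, Submodule.coe_inner] using h
    have hef : ∀ i j, (inner ℂ (e i) (f j) : ℂ) = 0 := fun i j =>
      horth _ (he_mem i) _ (hf_mem j)
    have hfe : ∀ j i, (inner ℂ (f j) (e i) : ℂ) = 0 := fun j i =>
      inner_eq_zero_symm.mp (hef i j)
    -- combined orthonormal basis
    let g : Fin d₁ ⊕ Fin d₂ → E := Sum.elim e f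
    have hg_inner : ∀ p q, (inner ℂ (g p) (g q) : ℂ) = if p = q then 1 else 0 := by
      rintro (i | j) (k | l) <;>
        simp [g, he, hf, hef, hfe]
    have hg_on : Orthonormal ℂ g := orthonormal_iff_ite.mpr hg_inner
    have hspan : ⊤ ≤ Submodule.span ℂ (Set.range g) := by
      have h1 : Submodule.span ℂ (Set.range e) = H₁ := by
        have hr : Set.range e = H₁.subtype ''
            Set.range (stdOrthonormalBasis ℂ H₁) := by
          rw [← Set.range_comp]; rfl
        have hsp : Submodule.span ℂ
            (Set.range (stdOrthonormalBasis ℂ H₁ : _ → H₁)) = ⊤ := by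
          rw [← (stdOrthonormalBasis ℂ H₁).coe_toBasis]
          exact Module.Basis.span_eq _
        rw [hr, Submodule.span_image, hsp, Submodule.map_subtype_top]
      have h2 : Submodule.span ℂ (Set.range f) = H₁ᗮ := by
        have hr : Set.range f = H₁ᗮ.subtype ''
            Set.range (stdOrthonormalBasis ℂ H₁ᗮ) := by
          rw [← Set.range_comp]; rfl
        have hsp : Submodule.span ℂ
            (Set.range (stdOrthonormalBasis ℂ H₁ᗮ : _ → H₁ᗮ)) = ⊤ := by
          rw [← (stdOrthonormalBasis ℂ H₁ᗮ).coe_toBasis]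
          exact Module.Basis.span_eq _
        rw [hr, Submodule.span_image, hsp, Submodule.map_subtype_top]
      rw [show Set.range g = Set.range e ∪ Set.range f from Set.Sum.elim_range e f,
        Submodule.span_union, h1, h2, Submodule.sup_orthogonal_of_hasOrthogonalProjection]
    let B : OrthonormalBasis (Fin d₁ ⊕ Fin d₂) ℂ E := OrthonormalBasis.mk hg_on hspan
    have hB : ∀ p, B p = g p := fun p => by
      rw [show B = OrthonormalBasis.mk hg_on hspan from rfl, OrthonormalBasis.coe_mk]
    -- membership of generators
    have memA : ∀ x ∈ H₁, ∀ y ∈ H₁ᗮ, opA x y ∈ L := by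
      intro x hx y hy
      exact LieSubalgebra.subset_lieSpan ⟨x, hx, y, hy, rfl⟩
    have memS : ∀ x ∈ H₁, ∀ y ∈ H₁ᗮ, opS x y ∈ L := by
      intro x hx y hy
      rw [opS_eq]
      exact memA _ (H₁.smul_mem _ hx) _ hy
    let i₀ : Fin d₁ := ⟨0, hd1pos⟩
    let j₀ : Fin d₂ := ⟨0, hpos⟩
    have memA_ef : ∀ i j, opA (e i) (f j) ∈ L := fun i j =>
      memA _ (he_mem i) _ (hf_mem j)
    have memS_ef : ∀ i j, opS (e i) (f j) ∈ L := fun i j =>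
      memS _ (he_mem i) _ (hf_mem j)
    have memA_ee : ∀ i k, opA (e i) (e k) ∈ L := by
      intro i k
      by_cases hik : i = k
      · rw [hik, opA_self]; exact L.zero_mem
      · have hbr := lie_opA_opA (e i) (e k) (f j₀) (by rw [hf]; simp)
          (hfe j₀ i) (hef i j₀) (hfe j₀ k) (hef k j₀)
          (by simp [he, hik]) (by simp [he, Ne.symm hik])
        rw [← neg_neg (opA (e i) (e k)), ← hbr]
        exact neg_mem (L.lie_mem (memA_ef i j₀) (memA_ef k j₀))
    have memS_ee : ∀ i k, i ≠ k → opS (e i) (e k) ∈ L := by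
      intro i k hik
      have hbr := lie_opS_opA (e i) (e k) (f j₀) (by rw [hf]; simp)
        (hfe j₀ i) (hef i j₀) (hfe j₀ k) (hef k j₀)
        (by simp [he, hik]) (by simp [he, Ne.symm hik])
      rw [← neg_neg (opS (e i) (e k)), ← hbr]
      exact neg_mem (L.lie_mem (memS_ef i j₀) (memA_ef k j₀))
    have memA_ff : ∀ j l, opA (f j) (f l) ∈ L := by
      intro j l
      by_cases hjl : j = l
      · rw [hjl, opA_self]; exact L.zero_mem
      · have hbr := lie_opA_opA (f j) (f l) (e i₀) (by rw [he]; simp)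
          (hef i₀ j) (hfe j i₀) (hef i₀ l) (hfe l i₀)
          (by simp [hf, hjl]) (by simp [hf, Ne.symm hjl])
        rw [← neg_neg (opA (f j) (f l)), ← hbr]
        have h1 : opA (f j) (e i₀) ∈ L := by
          rw [opA_swap]; exact neg_mem (memA_ef i₀ j)
        have h2 : opA (f l) (e i₀) ∈ L := by
          rw [opA_swap]; exact neg_mem (memA_ef i₀ l)
        exact neg_mem (L.lie_mem h1 h2)
    have memS_ff : ∀ j l, j ≠ l → opS (f j) (f l) ∈ L := by
      intro j l hjl
      have hbr := lie_opS_opA (f j) (f l) (e i₀) (by rw [he]; simp)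
        (hef i₀ j) (hfe j i₀) (hef i₀ l) (hfe l i₀)
        (by simp [hf, hjl]) (by simp [hf, Ne.symm hjl])
      rw [← neg_neg (opS (f j) (f l)), ← hbr]
      have h1 : opS (f j) (e i₀) ∈ L := by
        rw [opS_swap]; exact memS_ef i₀ j
      have h2 : opA (f l) (e i₀) ∈ L := by
        rw [opA_swap]; exact neg_mem (memA_ef i₀ l)
      exact neg_mem (L.lie_mem h1 h2)
    have memA_g : ∀ p q, opA (g p) (g q) ∈ L := by
      rintro (i | j) (k | l)
      · exact memA_ee i k
      · exact memA_ef i l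
      · rw [show g (Sum.inr j) = f j from rfl, show g (Sum.inl k) = e k from rfl,
          opA_swap]
        exact neg_mem (memA_ef k j)
      · exact memA_ff j l
    have memS_g : ∀ p q, p ≠ q → opS (g p) (g q) ∈ L := by
      rintro (i | j) (k | l) hpq
      · exact memS_ee i k (by simpa using hpq)
      · exact memS_ef i l
      · rw [show g (Sum.inr j) = f j from rfl, show g (Sum.inl k) = e k from rfl,
          opS_swap]
        exact memS_ef k j
      · exact memS_ff j l (by simpa using hpq)
    have memD_ef : ∀ i j, opD (e i) (f j) ∈ L := by
      intro i j
      rw [opD_eq _ _ (by rw [he]; simp) (by rw [hf]; simp) (hef i j) (hfe j i)]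
      exact L.smul_mem _ (L.lie_mem (memA_ef i j) (memS_ef i j))
    have memD_g : ∀ p, opD (g p) (g (Sum.inl i₀)) ∈ L := by
      rintro (i | j)
      · rw [show g (Sum.inl i) = e i from rfl, show g (Sum.inl i₀) = e i₀ from rfl,
          ← opD_sub (e i) (e i₀) (f j₀)]
        exact sub_mem (memD_ef i j₀) (memD_ef i₀ j₀)
      · rw [show g (Sum.inr j) = f j from rfl, show g (Sum.inl i₀) = e i₀ from rfl,
          opD_swap]
        exact neg_mem (memD_ef i₀ j)
    -- expansion of X
    have hexp : X = ∑ p : Fin d₁ ⊕ Fin d₂, ∑ q : Fin d₁ ⊕ Fin d₂,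
        (inner ℂ (g p) (X (g q)) : ℂ) • ketBra (g p) (g q) := by
      refine B.toBasis.ext fun q' => ?_
      have hBq : B.toBasis q' = g q' := by rw [B.coe_toBasis, hB]
      rw [hBq, LinearMap.sum_apply]
      have hcol : ∀ p, (∑ q : Fin d₁ ⊕ Fin d₂,
          (inner ℂ (g p) (X (g q)) : ℂ) • ketBra (g p) (g q)) (g q')
          = (inner ℂ (g p) (X (g q')) : ℂ) • g p := by
        intro p
        rw [LinearMap.sum_apply]
        rw [Finset.sum_eq_single q']
        · simp only [LinearMap.smul_apply, ketBra_apply, hg_inner]; simp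
        · intro q _ hq
          simp [hg_inner, hq]
        · simp
      simp_rw [hcol]
      conv_lhs => rw [← B.sum_repr' (X (g q'))]
      simp [hB]
    -- skew symmetry of coefficients
    have hskew : ∀ p q, (inner ℂ (g q) (X (g p)) : ℂ)
        = -(starRingEnd ℂ) (inner ℂ (g p) (X (g q)) : ℂ) := by
      intro p q
      have h := LinearMap.adjoint_inner_right X (g q) (g p)
      rw [hadj] at h
      simp only [LinearMap.neg_apply, inner_neg_right] at h
      have h2 : (inner ℂ (X (g q)) (g p) : ℂ)
          = (starRingEnd ℂ) (inner ℂ (g p) (X (g q)) : ℂ) := (inner_conj_symm _ _).symm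
      linear_combination -h - h2
    -- trace condition on diagonal coefficients
    have htrd : ∑ p : Fin d₁ ⊕ Fin d₂, (inner ℂ (g p) (X (g p)) : ℂ) = 0 := by
      have h1 : trace ℂ E X = ∑ p : Fin d₁ ⊕ Fin d₂, (inner ℂ (g p) (X (g p)) : ℂ) := by
        conv_lhs => rw [hexp]
        rw [map_sum]
        simp_rw [map_sum, map_smul, trace_ketBra, hg_inner, smul_eq_mul, mul_ite,
          mul_one, mul_zero]
        simp [Finset.sum_ite_eq']
      rw [← h1, htr]
    -- the key decomposition
    have key : X = (2⁻¹ : ℝ) • ∑ p : Fin d₁ ⊕ Fin d₂, ∑ q : Fin d₁ ⊕ Fin d₂,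
        ((inner ℂ (g p) (X (g q)) : ℂ).re • opA (g p) (g q)
          + (inner ℂ (g p) (X (g q)) : ℂ).im • opS (g p) (g q)) := by
      have hterm : ∀ p q, ((inner ℂ (g p) (X (g q)) : ℂ).re • opA (g p) (g q)
          + (inner ℂ (g p) (X (g q)) : ℂ).im • opS (g p) (g q))
          = (inner ℂ (g p) (X (g q)) : ℂ) • ketBra (g p) (g q)
            + (inner ℂ (g q) (X (g p)) : ℂ) • ketBra (g q) (g p) := by
        intro p q
        rw [hskew p q, realSmul, realSmul]
        simp only [opA, opS]
        set z : ℂ := (inner ℂ (g p) (X (g q)) : ℂ) with hz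
        match_scalars
        · rw [← Complex.re_add_im z]; push_cast; ring_nf
          simp [Complex.ext_iff]
        · simp [Complex.ext_iff]
      simp_rw [hterm]
      simp_rw [Finset.sum_add_distrib]
      have hswap : ∑ p : Fin d₁ ⊕ Fin d₂, ∑ q : Fin d₁ ⊕ Fin d₂,
          (inner ℂ (g q) (X (g p)) : ℂ) • ketBra (g q) (g p)
          = ∑ q : Fin d₁ ⊕ Fin d₂, ∑ p : Fin d₁ ⊕ Fin d₂,
          (inner ℂ (g q) (X (g p)) : ℂ) • ketBra (g q) (g p) := Finset.sum_comm
      rw [hswap, ← hexp]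
      module
    -- conclude
    rw [SetLike.mem_coe, key]
    refine L.smul_mem _ ?_
    have hsplit : (∑ p : Fin d₁ ⊕ Fin d₂, ∑ q : Fin d₁ ⊕ Fin d₂,
        ((inner ℂ (g p) (X (g q)) : ℂ).re • opA (g p) (g q)
          + (inner ℂ (g p) (X (g q)) : ℂ).im • opS (g p) (g q)))
        = (∑ p : Fin d₁ ⊕ Fin d₂, ∑ q ∈ Finset.univ.erase p,
            ((inner ℂ (g p) (X (g q)) : ℂ).re • opA (g p) (g q)
              + (inner ℂ (g p) (X (g q)) : ℂ).im • opS (g p) (g q)))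
          + ∑ p : Fin d₁ ⊕ Fin d₂,
            ((inner ℂ (g p) (X (g p)) : ℂ).re • opA (g p) (g p)
              + (inner ℂ (g p) (X (g p)) : ℂ).im • opS (g p) (g p)) := by
      rw [← Finset.sum_add_distrib]
      exact Finset.sum_congr rfl fun p _ =>
        (Finset.sum_erase_add _ _ (Finset.mem_univ p)).symm
    rw [hsplit]
    refine add_mem (sum_mem fun p _ => sum_mem fun q hq => ?_) ?_
    · have hpq : q ≠ p := Finset.ne_of_mem_erase hq
      exact add_mem (L.smul_mem _ (memA_g p q)) (L.smul_mem _ (memS_g p q (Ne.symm hpq)))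
    · -- diagonal part
      have hre : ∀ p : Fin d₁ ⊕ Fin d₂, (inner ℂ (g p) (X (g p)) : ℂ).re = 0 := by
        intro p
        have h := hskew p p
        set z : ℂ := (inner ℂ (g p) (X (g p)) : ℂ) with hz
        have h2 := congrArg Complex.re h
        simp only [Complex.neg_re, Complex.conj_re] at h2
        linarith
      have hdiag : ∀ p : Fin d₁ ⊕ Fin d₂,
          ((inner ℂ (g p) (X (g p)) : ℂ).re • opA (g p) (g p)
            + (inner ℂ (g p) (X (g p)) : ℂ).im • opS (g p) (g p))
          = (inner ℂ (g p) (X (g p)) : ℂ).im • opS (g p) (g p) := by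
        intro p
        rw [hre p, zero_smul, zero_add]
      have him : ∑ p : Fin d₁ ⊕ Fin d₂, (inner ℂ (g p) (X (g p)) : ℂ).im = 0 := by
        have h := congrArg Complex.im htrd
        simpa [Complex.im_sum] using h
      have h2 : ∑ p : Fin d₁ ⊕ Fin d₂,
          ((inner ℂ (g p) (X (g p)) : ℂ).re • opA (g p) (g p)
            + (inner ℂ (g p) (X (g p)) : ℂ).im • opS (g p) (g p))
          = ∑ p : Fin d₁ ⊕ Fin d₂, (inner ℂ (g p) (X (g p)) : ℂ).im
              • (opS (g p) (g p) - opS (g (Sum.inl i₀)) (g (Sum.inl i₀))) := by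
        rw [Finset.sum_congr rfl fun p _ => hdiag p]
        have h3 : ∑ p : Fin d₁ ⊕ Fin d₂, (inner ℂ (g p) (X (g p)) : ℂ).im
              • (opS (g p) (g p) - opS (g (Sum.inl i₀)) (g (Sum.inl i₀)))
            = ∑ p : Fin d₁ ⊕ Fin d₂,
              (inner ℂ (g p) (X (g p)) : ℂ).im • opS (g p) (g p) := by
          simp only [smul_sub, Finset.sum_sub_distrib, ← Finset.sum_smul, him,
            zero_smul, sub_zero]
        rw [h3]
      rw [h2]
      refine sum_mem fun p _ => L.smul_mem _ ?_
      have h4 : opS (g p) (g p) - opS (g (Sum.inl i₀)) (g (Sum.inl i₀))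
          = (2 : ℝ) • opD (g p) (g (Sum.inl i₀)) := by
        rw [realSmul]
        simp only [opS, opD]
        module
      rw [h4]
      exact L.smul_mem _ (memD_g p)
end
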